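/- Let w be a pair-word (concatenation of blocks from {41, 43, 23, 25}) of length at least 2. (a) If the last letter of w is 5, then T_1^{lin}(w) ends with 1,4. (b) If the last letter of w is 3, then T_4^{lin}(w) ends with 3,4. -/

import Mathlib

/-- `sigma5 j x` is the representative in `{1,...,5}` of `x - j` mod 5. -/
def sigma5 (j x : ℕ) : ℕ := (x + 4 - j) % 5 + 1

/-- Position of a letter along the path graph 1—4—3—2—5. -/
def pos5 (x : ℕ) : ℕ :=
  match x with
  | 1 => 0 | 4 => 1 | 3 => 2 | 2 => 3 | 5 => 4 | _ => 0

/-- The vertex at a given position of the path graph 1—4—3—2—5. -/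
def vtx5 (i : ℕ) : ℕ := [1, 4, 3, 2, 5].getD i 0

/-- `ins5 x y` is the word of interior vertices, in order, of the unique simple
path from `x` to `y` in the path graph 1—4—3—2—5 (empty if `x = y`). -/
def ins5 (x y : ℕ) : List ℕ :=
  if pos5 x < pos5 y then
    (List.range (pos5 y - pos5 x - 1)).map (fun k => vtx5 (pos5 x + 1 + k))
  else
    (List.range (pos5 x - pos5 y - 1)).map (fun k => vtx5 (pos5 x - 1 - k))

/-- Graph distance in the path graph 1—4—3—2—5. -/
def dist5 (x y : ℕ) : ℕ := max (pos5 x) (pos5 y) - min (pos5 x) (pos5 y)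

/-- Linear transformation `T_j^{lin}`: subtract `j` mod 5 from each letter and insert,
between consecutive letters, the interior vertices of the connecting path (no wrap-around). -/
def Tlin (j : ℕ) : List ℕ → List ℕ
  | [] => []
  | [x] => [sigma5 j x]
  | x :: y :: rest => (sigma5 j x :: ins5 (sigma5 j x) (sigma5 j y)) ++ Tlin j (y :: rest)

/-- Cyclic transformation `T_j`: as `Tlin`, with the wrap-around insertion from the
last letter back to the first appended at the end. -/
def Tcyc (j : ℕ) (w : List ℕ) : List ℕ :=
  Tlin j w ++ ins5 (sigma5 j (w.getLastD 0)) (sigma5 j (w.headD 0))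

/-- A pair-word: a finite concatenation of the two-letter blocks 41, 43, 23, 25. -/
def IsPairWord (w : List ℕ) : Prop :=
  ∃ bs : List (List ℕ), (∀ b ∈ bs, b ∈ [[4,1],[4,3],[2,3],[2,5]]) ∧ w = bs.flatten

/-- `n`-fold repetition of a word. -/
def wpow (w : List ℕ) (n : ℕ) : List ℕ := (List.replicate n w).flatten

lemma Tlin_append (j : ℕ) (l1 l2 : List ℕ) (h : l2 ≠ []) :
    ∃ A, Tlin j (l1 ++ l2) = A ++ Tlin j l2 := by
  induction l1 with
  | nil => exact ⟨[], rfl⟩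
  | cons x xs ih =>
    obtain ⟨A, hA⟩ := ih
    cases hxs : xs ++ l2 with
    | nil => exact absurd (List.append_eq_nil_iff.mp hxs).2 h
    | cons y rest =>
      refine ⟨(sigma5 j x :: ins5 (sigma5 j x) (sigma5 j y)) ++ A, ?_⟩
      show Tlin j (x :: (xs ++ l2)) = _
      rw [hxs]
      show (sigma5 j x :: ins5 (sigma5 j x) (sigma5 j y)) ++ Tlin j (y :: rest) = _
      rw [← hxs, hA, List.append_assoc]

theorem stmt6 (w : List ℕ) (hw : IsPairWord w) (hlen : 2 ≤ w.length) :
    (w.getLastD 0 = 5 → ∃ t, Tlin 1 w = t ++ [1, 4]) ∧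
    (w.getLastD 0 = 3 → ∃ t, Tlin 4 w = t ++ [3, 4]) := by
  obtain ⟨bs, hbs, rfl⟩ := hw
  rcases List.eq_nil_or_concat bs with rfl | ⟨l, b, rfl⟩
  · simp at hlen
  have hb : b ∈ [[4,1],[4,3],[2,3],[2,5]] := hbs b (by simp)
  simp only [List.concat_eq_append, List.flatten_append, List.flatten, List.append_eq, List.append_nil] at *
  have hlast : ∀ a c : ℕ, (l.flatten ++ [a, c]).getLastD 0 = c := by
    intro a c
    simp [List.getLastD_eq_getLast?, List.getLast?_append]
  fin_cases hb
  · refine ⟨fun h => ?_, fun h => ?_⟩ <;> rw [hlast] at h <;> omega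
  · refine ⟨fun h => ?_, fun h => ?_⟩
    · rw [hlast] at h; omega
    · obtain ⟨A, hA⟩ := Tlin_append 4 l.flatten [4,3] (by simp)
      exact ⟨A ++ [5,2], by rw [hA, List.append_assoc]; rfl⟩
  · refine ⟨fun h => ?_, fun h => ?_⟩
    · rw [hlast] at h; omega
    · obtain ⟨A, hA⟩ := Tlin_append 4 l.flatten [2,3] (by simp)
      exact ⟨A, by rw [hA]; rfl⟩
  · refine ⟨fun h => ?_, fun h => ?_⟩
    · obtain ⟨A, hA⟩ := Tlin_append 1 l.flatten [2,5] (by simp)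
      exact ⟨A, by rw [hA]; rfl⟩
    · rw [hlast] at h; omega
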